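/- For N i.i.d. uniform samples on [0,1] with order statistics u_1 ≤ ... ≤ u_N and spacings s_i = u_i - u_{i-1}, for any ε > 0 and any index 1 < i ≤ N-1, the probability that s_i < ε and s_{i+1} > ε equals (1-ε)_+^N - (1-2ε)_+^N, where y_+ = max(y, 0). -/

import Mathlib

open MeasureTheory Set
open scoped Pointwise

/-- The law of `N` i.i.d. Uniform[0,1] samples. -/
noncomputable def unifN (N : ℕ) : Measure (Fin N → ℝ) :=
  Measure.pi fun _ => volume.restrict (Set.Icc (0 : ℝ) 1)

/-- The `i`-th order statistic (0-indexed). -/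
noncomputable def orderStat {N : ℕ} (x : Fin N → ℝ) (i : Fin N) : ℝ :=
  x (Tuple.sort x i)

/-- Spacings `s_i = u_i - u_{i-1}` (0-indexed, with the convention `u_0 = 0`). -/
noncomputable def spacing {N : ℕ} (x : Fin N → ℝ) (i : Fin N) : ℝ :=
  if i.val = 0 then orderStat x i
  else orderStat x i - orderStat x ⟨i.val - 1, Nat.lt_of_le_of_lt (Nat.sub_le _ _) i.isLt⟩

namespace SpacingAux

variable {N : ℕ}

/-- predecessor index -/
def prd (s : Fin N) : Fin N := ⟨s.val - 1, Nat.lt_of_le_of_lt (Nat.sub_le _ _) s.isLt⟩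

lemma spacing_eq {x : Fin N → ℝ} {s : Fin N} (hs : s.val ≠ 0) :
    spacing x s = orderStat x s - orderStat x (prd s) := by
  rw [spacing, if_neg hs]; rfl

lemma orderStat_eq_of_strictMono {x : Fin N → ℝ} {σ : Equiv.Perm (Fin N)}
    (h : StrictMono (x ∘ σ)) (j : Fin N) : orderStat x j = x (σ j) := by
  have h2 := Tuple.unique_monotone (f := x) (σ := Tuple.sort x) (τ := σ)
    (Tuple.monotone_sort x) h.monotone
  exact congrFun h2 j

lemma inj_of_strictMono {x : Fin N → ℝ} {σ : Equiv.Perm (Fin N)}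
    (h : StrictMono (x ∘ σ)) : Function.Injective x := by
  intro a b hab
  have h3 : (x ∘ σ) (σ.symm a) = (x ∘ σ) (σ.symm b) := by
    simp only [Function.comp_apply, Equiv.apply_symm_apply, hab]
  have h4 := h.injective h3
  simpa using congrArg σ h4

lemma perm_unique {x : Fin N → ℝ} {σ τ : Equiv.Perm (Fin N)}
    (hσ : StrictMono (x ∘ σ)) (hτ : StrictMono (x ∘ τ)) : σ = τ := by
  have h2 := Tuple.unique_monotone hσ.monotone hτ.monotone
  exact Equiv.ext fun j => inj_of_strictMono hσ (congrFun h2 j)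

lemma strictMono_sort {x : Fin N → ℝ} (hx : Function.Injective x) :
    StrictMono (x ∘ Tuple.sort x) :=
  (Tuple.monotone_sort x).strictMono_of_injective (hx.comp (Equiv.injective _))


lemma vol_vadd (v : Fin N → ℝ) (A : Set (Fin N → ℝ)) : volume (v +ᵥ A) = volume A := by
  have h : v +ᵥ A = (fun x => -v + x) ⁻¹' A := by
    ext x
    simp [Set.mem_vadd_set_iff_neg_vadd_mem]
  rw [h, measure_preimage_add]

lemma null_linear (f : (Fin N → ℝ) →ₗ[ℝ] ℝ) (hf : f ≠ 0) (c : ℝ) :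
    volume {x : Fin N → ℝ | f x = c} = 0 := by
  obtain ⟨u, hu⟩ : ∃ u, f u ≠ 0 := by
    by_contra h
    push_neg at h
    exact hf (LinearMap.ext fun u => h u)
  set v : Fin N → ℝ := (c / f u) • u with hv
  have hfv : f v = c := by
    rw [hv, f.map_smul, smul_eq_mul, div_mul_cancel₀ _ hu]
  have hset : {x : Fin N → ℝ | f x = c} = v +ᵥ (LinearMap.ker f : Set (Fin N → ℝ)) := by
    ext x
    simp only [Set.mem_setOf_eq, Set.mem_vadd_set_iff_neg_vadd_mem, SetLike.mem_coe,
      LinearMap.mem_ker]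
    have : (-v +ᵥ x) = x - v := by
      funext k; show -v k + x k = x k - v k; ring
    rw [this, map_sub, hfv, sub_eq_zero]
  rw [hset, vol_vadd]
  refine Measure.addHaar_submodule volume _ ?_
  intro htop
  rw [LinearMap.ker_eq_top] at htop
  exact hf htop

lemma null_diff {k l : Fin N} (h : k ≠ l) (c : ℝ) :
    volume {x : Fin N → ℝ | x k - x l = c} = 0 := by
  have := null_linear (LinearMap.proj (R := ℝ) (φ := fun _ : Fin N => ℝ) k
    - LinearMap.proj l) ?_ c
  · simpa using this
  · intro h0
    have h1 := DFunLike.congr_fun h0 (Pi.single k 1)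
    simp [Pi.single_apply, h.symm] at h1

lemma null_eval (k : Fin N) (c : ℝ) : volume {x : Fin N → ℝ | x k = c} = 0 := by
  have := null_linear (LinearMap.proj (R := ℝ) (φ := fun _ : Fin N => ℝ) k) ?_ c
  · simpa using this
  · intro h0
    have h1 := DFunLike.congr_fun h0 (Pi.single k 1)
    simp [Pi.single_apply] at h1

lemma null_noninj : volume {x : Fin N → ℝ | ¬ Function.Injective x} = 0 := by
  refine measure_mono_null (fun x hx => ?_)
    (measure_iUnion_null fun k : Fin N => measure_iUnion_null fun l : Fin N =>
      measure_iUnion_null fun h : k ≠ l => null_diff h 0)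
  simp only [Set.mem_setOf_eq, Function.Injective] at hx
  push_neg at hx
  obtain ⟨a, b, hab, hne⟩ := hx
  exact Set.mem_iUnion.2 ⟨a, Set.mem_iUnion.2 ⟨b, Set.mem_iUnion.2 ⟨hne, by
    simp [sub_eq_zero, hab]⟩⟩⟩

/-- the box `[0,c]^N` -/
def Box (N : ℕ) (c : ℝ) : Set (Fin N → ℝ) := Set.pi Set.univ fun _ => Set.Icc 0 c

lemma Box_measurable (c : ℝ) : MeasurableSet (Box N c) :=
  MeasurableSet.univ_pi fun _ => measurableSet_Icc

lemma vol_Box (c : ℝ) : volume (Box N c) = ENNReal.ofReal c ^ N := by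
  rw [Box, volume_pi_pi]
  simp [Real.volume_Icc]

lemma unifN_eq (N : ℕ) : unifN N = volume.restrict (Box N 1) := by
  refine ((Measure.pi_eq (μ := fun _ : Fin N => volume.restrict (Set.Icc (0:ℝ) 1))
    fun s hs => ?_).symm : volume.restrict (Box N 1) = unifN N).symm
  rw [Measure.restrict_apply' (Box_measurable 1), Box, ← Set.pi_inter_distrib (t := s) (t₁ := fun _ => Set.Icc (0:ℝ) 1), volume_pi_pi]
  exact Finset.prod_congr rfl fun i _ => (Measure.restrict_apply (hs i)).symm


/-- the set of `x` such that `x ∘ σ` is strictly monotone -/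
def Pset {N : ℕ} (σ : Equiv.Perm (Fin N)) : Set (Fin N → ℝ) := {x | StrictMono (x ∘ σ)}

lemma Pset_measurable (σ : Equiv.Perm (Fin N)) : MeasurableSet (Pset σ) := by
  have h : Pset σ = ⋂ (a : Fin N) (b : Fin N) (_ : a < b), {x : Fin N → ℝ | x (σ a) < x (σ b)} := by
    ext x
    simp only [Pset, Set.mem_setOf_eq, Set.mem_iInter, StrictMono, Function.comp_apply]
  rw [h]
  exact MeasurableSet.iInter fun a => MeasurableSet.iInter fun b => MeasurableSet.iInter fun _ =>
    measurableSet_lt (measurable_pi_apply _) (measurable_pi_apply _)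

lemma Pset_subset_inj (σ : Equiv.Perm (Fin N)) :
    Pset σ ⊆ {x : Fin N → ℝ | Function.Injective x} :=
  fun _ hx => inj_of_strictMono hx

lemma inj_subset_iUnion :
    {x : Fin N → ℝ | Function.Injective x} ⊆ ⋃ σ : Equiv.Perm (Fin N), Pset σ :=
  fun x hx => Set.mem_iUnion.2 ⟨Tuple.sort x, strictMono_sort hx⟩

lemma Pset_disjoint : Pairwise (Function.onFun Disjoint (Pset (N := N))) := by
  intro σ τ hne
  rw [Function.onFun, Set.disjoint_left]
  intro x hσ hτ
  exact hne (perm_unique hσ hτ)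

lemma sum_pieces {B : Equiv.Perm (Fin N) → Set (Fin N → ℝ)}
    (hmeas : ∀ σ, MeasurableSet (B σ)) (hsub : ∀ σ, B σ ⊆ Pset σ) :
    volume (⋃ σ, B σ) = ∑ σ, volume (B σ) := by
  rw [measure_iUnion ?_ hmeas, tsum_fintype]
  intro σ τ hne
  exact (Pset_disjoint hne).mono (hsub σ) (hsub τ)

lemma vol_inter_inj (T : Set (Fin N → ℝ)) :
    volume (T ∩ {x | Function.Injective x}) = volume T := by
  refine le_antisymm (measure_mono Set.inter_subset_left) ?_
  calc volume T ≤ volume ((T ∩ {x | Function.Injective x}) ∪ {x | ¬ Function.Injective x}) := by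
        refine measure_mono fun x hx => ?_
        by_cases h : Function.Injective x
        · exact Or.inl ⟨hx, h⟩
        · exact Or.inr h
    _ ≤ volume (T ∩ {x | Function.Injective x}) + volume {x : Fin N → ℝ | ¬ Function.Injective x} :=
        measure_union_le _ _
    _ = volume (T ∩ {x | Function.Injective x}) := by rw [null_noninj, add_zero]

lemma inter_inj_eq_iUnion (T : Set (Fin N → ℝ)) :
    T ∩ {x | Function.Injective x} = ⋃ σ, T ∩ Pset σ := by
  ext x
  constructor
  · rintro ⟨hT, hinj⟩
    obtain ⟨σ, hσ⟩ := Set.mem_iUnion.1 (inj_subset_iUnion hinj)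
    exact Set.mem_iUnion.2 ⟨σ, hT, hσ⟩
  · rintro h
    obtain ⟨σ, hT, hσ⟩ := Set.mem_iUnion.1 h
    exact ⟨hT, Pset_subset_inj σ hσ⟩

lemma vol_decomp (T : Set (Fin N → ℝ)) (hT : ∀ σ, MeasurableSet (T ∩ Pset σ)) :
    volume T = ∑ σ, volume (T ∩ Pset σ) := by
  rw [← vol_inter_inj T, inter_inj_eq_iUnion T]
  exact sum_pieces hT fun σ => Set.inter_subset_right

lemma nullmeasurable_of_pieces (T : Set (Fin N → ℝ)) (hT : ∀ σ, MeasurableSet (T ∩ Pset σ)) :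
    NullMeasurableSet T volume := by
  have hmeas : MeasurableSet (⋃ σ, T ∩ Pset σ) := MeasurableSet.iUnion hT
  refine (hmeas.nullMeasurableSet).congr ?_
  rw [← inter_inj_eq_iUnion T]
  rw [Filter.eventuallyEq_set]
  have : ∀ᵐ x : Fin N → ℝ, Function.Injective x := ae_iff.2 null_noninj
  filter_upwards [this] with x hx
  simp [hx]


section Counting

variable {n : ℕ}

/-- number of elements of `S` that are `≤ j` -/
def aS (S : Finset (Fin (n+1))) (j : Fin (n+1)) : ℕ := (S.filter fun s => s ≤ j).card

lemma aS_mono (S : Finset (Fin (n+1))) : Monotone (aS S) := by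
  intro j j' h
  refine Finset.card_le_card fun s hs => ?_
  simp only [Finset.mem_filter] at *
  exact ⟨hs.1, le_trans hs.2 h⟩

lemma aS_zero (S : Finset (Fin (n+1))) (h0 : ∀ s ∈ S, s.val ≠ 0) : aS S 0 = 0 := by
  rw [aS, Finset.card_eq_zero]
  rw [Finset.eq_empty_iff_forall_notMem]
  intro s hs
  rw [Finset.mem_filter] at hs
  exact h0 s hs.1 (by rw [Fin.le_zero_iff.1 hs.2, Fin.val_zero])

lemma aS_last (S : Finset (Fin (n+1))) : aS S (Fin.last n) = S.card := by
  rw [aS, Finset.filter_true_of_mem fun s _ => Fin.le_last s]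

lemma aS_le (S : Finset (Fin (n+1))) (j : Fin (n+1)) : aS S j ≤ S.card :=
  Finset.card_filter_le _ _

lemma aS_succ (S : Finset (Fin (n+1))) (j : Fin n) :
    aS S j.succ = aS S j.castSucc + (if j.succ ∈ S then 1 else 0) := by
  have hle : ∀ s : Fin (n+1), s ≤ j.succ ↔ s ≤ j.castSucc ∨ s = j.succ := by
    intro s
    rw [Fin.le_def, Fin.le_def, Fin.ext_iff]
    simp only [Fin.val_succ, Fin.coe_castSucc]
    omega
  have hfilter : S.filter (fun s => s ≤ j.succ) =
      (if j.succ ∈ S then insert j.succ (S.filter fun s => s ≤ j.castSucc)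
        else S.filter fun s => s ≤ j.castSucc) := by
    split_ifs with h
    · ext s
      simp only [Finset.mem_filter, Finset.mem_insert, hle]
      constructor
      · rintro ⟨h1, h2 | h2⟩
        · exact Or.inr ⟨h1, h2⟩
        · exact Or.inl h2
      · rintro (rfl | ⟨h1, h2⟩)
        · exact ⟨h, Or.inr rfl⟩
        · exact ⟨h1, Or.inl h2⟩
    · ext s
      simp only [Finset.mem_filter, hle]
      constructor
      · rintro ⟨h1, h2 | rfl⟩
        · exact ⟨h1, h2⟩
        · exact absurd h1 h
      · rintro ⟨h1, h2⟩
        exact ⟨h1, Or.inl h2⟩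
  rw [aS, hfilter]
  split_ifs with h
  · rw [Finset.card_insert_of_notMem, aS]
    intro hmem
    rw [Finset.mem_filter, Fin.le_def] at hmem
    simp only [Fin.val_succ, Fin.coe_castSucc] at hmem
    omega
  · rw [aS, add_zero]

lemma prd_succ (j : Fin n) : prd j.succ = j.castSucc := by
  rw [prd, Fin.ext_iff]
  simp

lemma exists_succ_eq {s : Fin (n+1)} (hs : s.val ≠ 0) : ∃ j : Fin n, j.succ = s := by
  refine ⟨⟨s.val - 1, by have := s.isLt; omega⟩, ?_⟩
  rw [Fin.ext_iff, Fin.val_succ, Fin.val_mk]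
  omega

end Counting


section Claims

variable {n : ℕ} (ε : ℝ) (S : Finset (Fin (n+1))) (σ : Equiv.Perm (Fin (n+1)))

/-- the gap event, written in explicit coordinates relative to `σ` -/
def EvS : Set (Fin (n+1) → ℝ) := {x | ∀ s ∈ S, ε < x (σ s) - x (σ (prd s))}

lemma EvS_measurable : MeasurableSet (EvS ε S σ) := by
  have h : EvS ε S σ = ⋂ (s : Fin (n+1)) (_ : s ∈ S),
      {x : Fin (n+1) → ℝ | ε < x (σ s) - x (σ (prd s))} := by
    ext x; simp [EvS]
  rw [h]
  exact MeasurableSet.iInter fun s => MeasurableSet.iInter fun _ =>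
    measurableSet_lt measurable_const
      (Measurable.sub (measurable_pi_apply (σ s)) (measurable_pi_apply (σ (prd s))))

/-- the shift vector -/
def wS : Fin (n+1) → ℝ := fun k => ε * aS S (σ.symm k)

lemma claimU (hε : 0 < ε) (h0 : ∀ s ∈ S, s.val ≠ 0) :
    (EvS ε S σ ∩ Box (n+1) 1) ∩ Pset σ ⊆
      wS ε S σ +ᵥ (Box (n+1) (1 - S.card * ε) ∩ Pset σ) := by
  rintro x ⟨⟨hE, hbox⟩, hP⟩
  have hP' : StrictMono (x ∘ σ) := hP
  set g : Fin (n+1) → ℝ := fun j => x (σ j) - ε * aS S j with hg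
  have hgmono : StrictMono g := by
    refine Fin.strictMono_iff_lt_succ.2 fun j => ?_
    simp only [hg]
    rw [aS_succ]
    by_cases hjs : j.succ ∈ S
    · have h1 := hE _ hjs
      rw [prd_succ] at h1
      rw [if_pos hjs]
      push_cast
      linarith
    · have h1 := hP' (Fin.castSucc_lt_succ : j.castSucc < j.succ)
      simp only [Function.comp_apply] at h1
      rw [if_neg hjs]
      push_cast
      linarith
  have hg0 : 0 ≤ g 0 := by
    simp only [hg]
    rw [aS_zero S h0]
    have := (hbox (σ 0) (Set.mem_univ _)).1
    simpa using this
  have hglast : g (Fin.last n) ≤ 1 - S.card * ε := by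
    simp only [hg]
    rw [aS_last]
    have := (hbox (σ (Fin.last n)) (Set.mem_univ _)).2
    linarith
  rw [Set.mem_vadd_set_iff_neg_vadd_mem]
  have hyg : ∀ k, (-wS ε S σ +ᵥ x) k = g (σ.symm k) := by
    intro k
    show -wS ε S σ k + x k = g (σ.symm k)
    simp only [hg, wS, Equiv.apply_symm_apply]
    ring
  constructor
  · intro k _
    rw [hyg]
    exact ⟨le_trans hg0 (hgmono.monotone (Fin.zero_le _)),
      le_trans (hgmono.monotone (Fin.le_last _)) hglast⟩
  · show StrictMono ((-wS ε S σ +ᵥ x) ∘ σ)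
    have : (-wS ε S σ +ᵥ x) ∘ σ = g := by
      funext j
      rw [Function.comp_apply, hyg, Equiv.symm_apply_apply]
    rw [this]
    exact hgmono

lemma claimL (hε : 0 < ε) (h0 : ∀ s ∈ S, s.val ≠ 0) :
    wS ε S σ +ᵥ ((Set.pi Set.univ fun _ => Set.Ioo (0:ℝ) (1 - S.card * ε)) ∩ Pset σ) ⊆
      (EvS ε S σ ∩ Box (n+1) 1) ∩ Pset σ := by
  rintro x ⟨y, ⟨hybox, hyP⟩, rfl⟩
  beta_reduce
  have hyP' : StrictMono (y ∘ σ) := hyP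
  have key : ∀ j, (wS ε S σ +ᵥ y) (σ j) = y (σ j) + ε * aS S j := by
    intro j
    show wS ε S σ (σ j) + y (σ j) = _
    simp only [wS, Equiv.symm_apply_apply]
    ring
  have hyIoo : ∀ k, y k ∈ Set.Ioo (0:ℝ) (1 - S.card * ε) := fun k => hybox k (Set.mem_univ _)
  have hPs : StrictMono ((wS ε S σ +ᵥ y) ∘ σ) := by
    refine Fin.strictMono_iff_lt_succ.2 fun j => ?_
    simp only [Function.comp_apply]
    rw [key, key]
    have h1 := hyP' (Fin.castSucc_lt_succ : j.castSucc < j.succ)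
    simp only [Function.comp_apply] at h1
    have h2 : (aS S j.castSucc : ℝ) ≤ aS S j.succ := by
      exact_mod_cast aS_mono S (Fin.castSucc_lt_succ : j.castSucc < j.succ).le
    nlinarith
  refine ⟨⟨?_, ?_⟩, hPs⟩
  · intro s hs
    obtain ⟨j, rfl⟩ := exists_succ_eq (h0 s hs)
    rw [prd_succ, key, key, aS_succ, if_pos hs]
    have h1 := hyP' (Fin.castSucc_lt_succ : j.castSucc < j.succ)
    simp only [Function.comp_apply] at h1
    push_cast
    linarith
  · intro k _
    have h1 := hyIoo k
    have h2 : (wS ε S σ +ᵥ y) k = y k + ε * aS S (σ.symm k) := by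
      rw [← Equiv.apply_symm_apply σ k, key, Equiv.apply_symm_apply]
    rw [h2]
    have h3 : (0:ℝ) ≤ ε * aS S (σ.symm k) := by positivity
    have h4 : ε * (aS S (σ.symm k) : ℝ) ≤ ε * S.card := by
      have := aS_le S (σ.symm k)
      have : (aS S (σ.symm k) : ℝ) ≤ S.card := by exact_mod_cast this
      nlinarith
    constructor
    · linarith [h1.1]
    · linarith [h1.2]

lemma vol_piece (hε : 0 < ε) (h0 : ∀ s ∈ S, s.val ≠ 0) :
    volume ((EvS ε S σ ∩ Box (n+1) 1) ∩ Pset σ) =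
      volume (Box (n+1) (1 - S.card * ε) ∩ Pset σ) := by
  set c : ℝ := 1 - S.card * ε with hc
  set Io : Set (Fin (n+1) → ℝ) := Set.pi Set.univ fun _ => Set.Ioo (0:ℝ) c with hIo
  refine le_antisymm ?_ ?_
  · calc volume ((EvS ε S σ ∩ Box (n+1) 1) ∩ Pset σ)
        ≤ volume (wS ε S σ +ᵥ (Box (n+1) c ∩ Pset σ)) := measure_mono (claimU ε S σ hε h0)
      _ = volume (Box (n+1) c ∩ Pset σ) := vol_vadd _ _
  · have hZ : volume ((Box (n+1) c ∩ Pset σ) \ (Io ∩ Pset σ)) = 0 := by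
      refine measure_mono_null (fun x hx => ?_)
        (measure_iUnion_null fun k : Fin (n+1) =>
          measure_union_null (null_eval k 0) (null_eval k c))
      obtain ⟨⟨hxbox, hxP⟩, hnot⟩ := hx
      have : ¬ ∀ k, x k ∈ Set.Ioo (0:ℝ) c := by
        intro hall
        exact hnot ⟨fun k _ => hall k, hxP⟩

      push_neg at this
      obtain ⟨k, hk⟩ := this
      have hkIcc := hxbox k (Set.mem_univ _)
      refine Set.mem_iUnion.2 ⟨k, ?_⟩
      rw [Set.mem_Ioo] at hk
      push_neg at hk
      rcases lt_or_ge 0 (x k) with h | h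
      · exact Or.inr (le_antisymm hkIcc.2 (hk h))
      · exact Or.inl (le_antisymm h hkIcc.1)
    calc volume (Box (n+1) c ∩ Pset σ)
        ≤ volume ((Io ∩ Pset σ) ∪ ((Box (n+1) c ∩ Pset σ) \ (Io ∩ Pset σ))) := by
          refine measure_mono fun x hx => ?_
          by_cases h : x ∈ Io ∩ Pset σ
          · exact Or.inl h
          · exact Or.inr ⟨hx, h⟩
      _ ≤ volume (Io ∩ Pset σ) + 0 :=
          le_trans (measure_union_le _ _) (by rw [hZ])
      _ = volume (wS ε S σ +ᵥ (Io ∩ Pset σ)) := by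
          rw [add_zero, vol_vadd]
      _ ≤ volume ((EvS ε S σ ∩ Box (n+1) 1) ∩ Pset σ) := measure_mono (claimL ε S σ hε h0)

end Claims


lemma gap {n : ℕ} {ε : ℝ} (hε : 0 < ε) (S : Finset (Fin (n+1)))
    (h0 : ∀ s ∈ S, s.val ≠ 0) :
    volume ({x : Fin (n+1) → ℝ | ∀ s ∈ S, ε < spacing x s} ∩ Box (n+1) 1)
      = ENNReal.ofReal ((max (1 - S.card * ε) 0) ^ (n+1)) := by
  set c : ℝ := 1 - S.card * ε with hc
  set T : Set (Fin (n+1) → ℝ) :=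
    {x | ∀ s ∈ S, ε < spacing x s} ∩ Box (n+1) 1 with hT
  have hTP : ∀ σ : Equiv.Perm (Fin (n+1)),
      T ∩ Pset σ = (EvS ε S σ ∩ Box (n+1) 1) ∩ Pset σ := by
    intro σ
    ext x
    constructor
    · rintro ⟨⟨h1, h2⟩, h3⟩
      refine ⟨⟨fun s hs => ?_, h2⟩, h3⟩
      have hsp := h1 s hs
      rwa [spacing_eq (h0 s hs), orderStat_eq_of_strictMono h3,
        orderStat_eq_of_strictMono h3] at hsp
    · rintro ⟨⟨h1, h2⟩, h3⟩
      refine ⟨⟨fun s hs => ?_, h2⟩, h3⟩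
      have hsp := h1 s hs
      rwa [spacing_eq (h0 s hs), orderStat_eq_of_strictMono h3,
        orderStat_eq_of_strictMono h3]
  have hmeas : ∀ σ : Equiv.Perm (Fin (n+1)), MeasurableSet (T ∩ Pset σ) := by
    intro σ
    rw [hTP σ]
    exact (((EvS_measurable ε S σ).inter (Box_measurable 1)).inter (Pset_measurable σ))
  rw [vol_decomp T hmeas]
  have hstep : ∀ σ : Equiv.Perm (Fin (n+1)),
      volume (T ∩ Pset σ) = volume (Box (n+1) c ∩ Pset σ) := by
    intro σ
    rw [hTP σ]
    exact vol_piece ε S σ hε h0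
  rw [Finset.sum_congr rfl fun σ _ => hstep σ,
    ← vol_decomp (Box (n+1) c) fun σ => (Box_measurable c).inter (Pset_measurable σ),
    vol_Box]
  rcases le_total c 0 with h | h
  · rw [ENNReal.ofReal_eq_zero.2 h, max_eq_right h]
    simp
  · rw [max_eq_left h, ← ENNReal.ofReal_pow h]


lemma null_spacing_eq {N : ℕ} {s : Fin N} (hs : s.val ≠ 0) (c : ℝ) :
    volume {x : Fin N → ℝ | spacing x s = c} = 0 := by
  refine measure_mono_null (fun x hx => ?_)
    (measure_iUnion_null fun k : Fin N => measure_iUnion_null fun l : Fin N =>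
      measure_iUnion_null fun h : k ≠ l => null_diff h c)
  have hsp : spacing x s = orderStat x s - orderStat x (prd s) := spacing_eq hs
  refine Set.mem_iUnion.2 ⟨Tuple.sort x s, Set.mem_iUnion.2 ⟨Tuple.sort x (prd s),
    Set.mem_iUnion.2 ⟨?_, ?_⟩⟩⟩
  · intro he
    have h1 : s = prd s := (Tuple.sort x).injective he
    have h2 : (prd s).val = s.val - 1 := rfl
    rw [Fin.ext_iff, h2] at h1
    omega
  · show orderStat x s - orderStat x (prd s) = c
    rw [← hsp]
    exact hx

end SpacingAux

open SpacingAux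

/-- For `N` i.i.d. Uniform[0,1] samples and any index `1 < i ≤ N-1` (1-indexed; here the
0-indexed `i` satisfies `1 ≤ i ≤ N-2`), the probability that `s_i < ε` and `s_{i+1} > ε`
equals `(1-ε)₊^N - (1-2ε)₊^N`. -/
theorem spacing_pair_prob (N : ℕ) (ε : ℝ) (hε : 0 < ε) (i : Fin N)
    (h1 : 1 ≤ i.val) (h2 : i.val ≤ N - 2) :
    unifN N {x : Fin N → ℝ |
        spacing x i < ε ∧
        ε < spacing x ⟨i.val + 1, by have := i.isLt; omega⟩} =
      ENNReal.ofReal ((max (1 - ε) 0) ^ N - (max (1 - 2 * ε) 0) ^ N) := by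
  obtain ⟨n, rfl⟩ : ∃ n, N = n + 1 := ⟨N - 1, by omega⟩
  have hilt := i.isLt
  set i1 : Fin (n+1) := ⟨i.val + 1, by omega⟩ with hi1
  have hi1v : i1.val = i.val + 1 := rfl
  have hprd1 : prd i1 = i := by
    rw [prd, Fin.ext_iff]
    simp [hi1v]
  have hi0 : i.val ≠ 0 := by omega
  have hi10 : i1.val ≠ 0 := by omega
  have hine : i ≠ i1 := fun h => by
    rw [Fin.ext_iff, hi1v] at h
    omega
  rw [unifN_eq, Measure.restrict_apply' (Box_measurable 1)]
  show volume ({x : Fin (n+1) → ℝ | spacing x i < ε ∧ ε < spacing x i1} ∩ Box (n+1) 1) = _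
  set B := {x : Fin (n+1) → ℝ | ε < spacing x i1} with hB
  set C := {x : Fin (n+1) → ℝ | ε ≤ spacing x i ∧ ε < spacing x i1} with hC
  set C2 := {x : Fin (n+1) → ℝ | ε < spacing x i ∧ ε < spacing x i1} with hC2
  have hBvol : volume (B ∩ Box (n+1) 1) = ENNReal.ofReal ((max (1 - ε) 0) ^ (n+1)) := by
    have hBset : B = {x : Fin (n+1) → ℝ |
        ∀ s ∈ ({i1} : Finset (Fin (n+1))), ε < spacing x s} := by
      ext x
      simp [hB]
    rw [hBset, gap hε _ (fun s hs => by
      rw [Finset.mem_singleton] at hs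
      subst hs
      exact hi10)]
    norm_num
  have hC2vol : volume (C2 ∩ Box (n+1) 1)
      = ENNReal.ofReal ((max (1 - 2 * ε) 0) ^ (n+1)) := by
    have hcard : ({i, i1} : Finset (Fin (n+1))).card = 2 := by
      rw [Finset.card_insert_of_notMem (by simp [hine]), Finset.card_singleton]
    have hC2set : C2 = {x : Fin (n+1) → ℝ |
        ∀ s ∈ ({i, i1} : Finset (Fin (n+1))), ε < spacing x s} := by
      ext x
      simp [hC2, Finset.forall_mem_insert]
    rw [hC2set, gap hε _ (fun s hs => by
      rw [Finset.mem_insert, Finset.mem_singleton] at hs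
      rcases hs with rfl | rfl
      exacts [hi0, hi10]), hcard]
    norm_num
  have hCC2 : volume (C ∩ Box (n+1) 1) = volume (C2 ∩ Box (n+1) 1) := by
    refine le_antisymm ?_
      (measure_mono (Set.inter_subset_inter (fun x hx => ⟨hx.1.le, hx.2⟩) subset_rfl))
    calc volume (C ∩ Box (n+1) 1)
        ≤ volume ((C2 ∩ Box (n+1) 1) ∪ {x : Fin (n+1) → ℝ | spacing x i = ε}) := by
          refine measure_mono fun x hx => ?_
          rcases eq_or_lt_of_le hx.1.1 with h | h
          · exact Or.inr h.symm
          · exact Or.inl ⟨⟨h, hx.1.2⟩, hx.2⟩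
      _ ≤ volume (C2 ∩ Box (n+1) 1) + volume {x : Fin (n+1) → ℝ | spacing x i = ε} :=
          measure_union_le _ _
      _ = volume (C2 ∩ Box (n+1) 1) := by rw [null_spacing_eq hi0 ε, add_zero]
  have hCnm : NullMeasurableSet (C ∩ Box (n+1) 1) volume := by
    refine nullmeasurable_of_pieces _ fun σ => ?_
    have heq : (C ∩ Box (n+1) 1) ∩ Pset σ =
        (({x : Fin (n+1) → ℝ | ε ≤ x (σ i) - x (σ (prd i)) ∧
          ε < x (σ i1) - x (σ (prd i1))}) ∩ Box (n+1) 1) ∩ Pset σ := by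
      ext x
      constructor
      · rintro ⟨⟨⟨ha, hb⟩, hbox⟩, hs⟩
        rw [spacing_eq hi0, orderStat_eq_of_strictMono hs, orderStat_eq_of_strictMono hs] at ha
        rw [spacing_eq hi10, orderStat_eq_of_strictMono hs, orderStat_eq_of_strictMono hs] at hb
        exact ⟨⟨⟨ha, hb⟩, hbox⟩, hs⟩
      · rintro ⟨⟨⟨ha, hb⟩, hbox⟩, hs⟩
        refine ⟨⟨⟨?_, ?_⟩, hbox⟩, hs⟩
        · rw [spacing_eq hi0, orderStat_eq_of_strictMono hs, orderStat_eq_of_strictMono hs]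
          exact ha
        · rw [spacing_eq hi10, orderStat_eq_of_strictMono hs, orderStat_eq_of_strictMono hs]
          exact hb
    rw [heq]
    refine MeasurableSet.inter (MeasurableSet.inter ?_ (Box_measurable 1)) (Pset_measurable σ)
    have hrw : {x : Fin (n+1) → ℝ | ε ≤ x (σ i) - x (σ (prd i)) ∧
        ε < x (σ i1) - x (σ (prd i1))} = {x : Fin (n+1) → ℝ | ε ≤ x (σ i) - x (σ (prd i))} ∩
        {x : Fin (n+1) → ℝ | ε < x (σ i1) - x (σ (prd i1))} := rfl
    rw [hrw]
    exact (measurableSet_le measurable_const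
        (Measurable.sub (measurable_pi_apply (σ i)) (measurable_pi_apply (σ (prd i))))).inter
      (measurableSet_lt measurable_const
        (Measurable.sub (measurable_pi_apply (σ i1)) (measurable_pi_apply (σ (prd i1)))))
  have hfin : volume (C ∩ Box (n+1) 1) ≠ ⊤ := by
    rw [hCC2, hC2vol]
    exact ENNReal.ofReal_ne_top
  have hsub : C ∩ Box (n+1) 1 ⊆ B ∩ Box (n+1) 1 :=
    Set.inter_subset_inter (fun x hx => hx.2) subset_rfl
  have hAeq : {x : Fin (n+1) → ℝ | spacing x i < ε ∧ ε < spacing x i1} ∩ Box (n+1) 1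
      = (B ∩ Box (n+1) 1) \ (C ∩ Box (n+1) 1) := by
    ext x
    simp only [Set.mem_inter_iff, Set.mem_diff, Set.mem_setOf_eq, hB, hC]
    constructor
    · rintro ⟨⟨ha, hb⟩, hbox⟩
      exact ⟨⟨hb, hbox⟩, fun hc => absurd hc.1.1 (not_le.2 ha)⟩
    · rintro ⟨⟨hb, hbox⟩, hnc⟩
      refine ⟨⟨?_, hb⟩, hbox⟩
      by_contra h
      exact hnc ⟨⟨not_lt.1 h, hb⟩, hbox⟩
  rw [hAeq, measure_diff hsub hCnm hfin, hBvol, hCC2, hC2vol]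
  exact (ENNReal.ofReal_sub _ (pow_nonneg (le_max_right _ _) _)).symm
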